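/- For real numbers λ₁,λ₂,λ₃, the 9×9 matrix I₃ ⊗ I₃ + (3/2)·(λ₁²·J₁⊗J₁ − λ₂²·J₂⊗J₂ + λ₃²·J₃⊗J₃) is positive semidefinite if and only if 4 − 9(λ₁⁴ + λ₂⁴ + λ₃⁴) + 27·λ₁²λ₂²λ₃² ≥ 0 and λᵢ² ≤ 2/3 for each i ∈ {1,2,3}. (This matrix is 9 times the Choi matrix of Φ∘Φ for the spin-1 polarization-scaling map Φ, so this characterizes complete positivity of Φ².) -/

import Mathlib

open Matrix Kronecker
open scoped ComplexOrder

/-- The spin-1 angular momentum matrix J₁. -/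
noncomputable def spinOneJ1 : Matrix (Fin 3) (Fin 3) ℂ :=
  ((1 / Real.sqrt 2 : ℝ) : ℂ) • !![0, 1, 0; 1, 0, 1; 0, 1, 0]

/-- The spin-1 angular momentum matrix J₂. -/
noncomputable def spinOneJ2 : Matrix (Fin 3) (Fin 3) ℂ :=
  ((1 / Real.sqrt 2 : ℝ) : ℂ) • !![0, -Complex.I, 0; Complex.I, 0, -Complex.I; 0, Complex.I, 0]

/-- The spin-1 angular momentum matrix J₃. -/
def spinOneJ3 : Matrix (Fin 3) (Fin 3) ℂ := !![1, 0, 0; 0, 0, 0; 0, 0, -1]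

lemma sqrt2_cancel : ((1 / Real.sqrt 2 : ℝ) : ℂ) * ((1 / Real.sqrt 2 : ℝ) : ℂ) = 1/2 := by
  rw [← Complex.ofReal_mul, div_mul_div_comm, Real.mul_self_sqrt (by norm_num)]
  norm_num

lemma J1kron : spinOneJ1 ⊗ₖ spinOneJ1 = ((1:ℂ)/2) • ((!![0, 1, 0; 1, 0, 1; 0, 1, 0] : Matrix (Fin 3) (Fin 3) ℂ) ⊗ₖ !![0, 1, 0; 1, 0, 1; 0, 1, 0]) := by
  rw [spinOneJ1, smul_kronecker, kronecker_smul, smul_smul, sqrt2_cancel]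

lemma J2kron : spinOneJ2 ⊗ₖ spinOneJ2 = ((1:ℂ)/2) • ((!![0, -Complex.I, 0; Complex.I, 0, -Complex.I; 0, Complex.I, 0] : Matrix (Fin 3) (Fin 3) ℂ) ⊗ₖ !![0, -Complex.I, 0; Complex.I, 0, -Complex.I; 0, Complex.I, 0]) := by
  rw [spinOneJ2, smul_kronecker, kronecker_smul, smul_smul, sqrt2_cancel]

set_option maxHeartbeats 2000000 in
lemma herm (l1 l2 l3 : ℝ) :
    ((1 : Matrix (Fin 3) (Fin 3) ℂ) ⊗ₖ (1 : Matrix (Fin 3) (Fin 3) ℂ) +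
      ((3 / 2 : ℝ) : ℂ) • (((l1 ^ 2 : ℝ) : ℂ) • (spinOneJ1 ⊗ₖ spinOneJ1) -
        ((l2 ^ 2 : ℝ) : ℂ) • (spinOneJ2 ⊗ₖ spinOneJ2) +
        ((l3 ^ 2 : ℝ) : ℂ) • (spinOneJ3 ⊗ₖ spinOneJ3))).IsHermitian := by
  rw [Matrix.IsHermitian, ← Matrix.ext_iff]
  rintro ⟨i, k⟩ ⟨j, l⟩
  fin_cases i <;> fin_cases k <;> fin_cases j <;> fin_cases l <;>
    norm_num [Matrix.conjTranspose_apply, Matrix.one_apply, Prod.ext_iff, Fin.ext_iff, spinOneJ1, spinOneJ2, spinOneJ3,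
      Matrix.kroneckerMap_apply, Matrix.vecHead, Matrix.vecTail, Prod.mk.injEq,
      Complex.conj_ofReal, _root_.map_mul] <;> (try ring)

set_option maxHeartbeats 2000000 in
lemma form_eval (l1 l2 l3 : ℝ) (x : Fin 3 × Fin 3 → ℂ) :
    star x ⬝ᵥ ((1 : Matrix (Fin 3) (Fin 3) ℂ) ⊗ₖ (1 : Matrix (Fin 3) (Fin 3) ℂ) +
      ((3 / 2 : ℝ) : ℂ) • (((l1 ^ 2 : ℝ) : ℂ) • (spinOneJ1 ⊗ₖ spinOneJ1) -
        ((l2 ^ 2 : ℝ) : ℂ) • (spinOneJ2 ⊗ₖ spinOneJ2) +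
        ((l3 ^ 2 : ℝ) : ℂ) • (spinOneJ3 ⊗ₖ spinOneJ3))) *ᵥ x
    = (((1 + 3/2*l3^2) * ((x (0,0)).re^2 + (x (0,0)).im^2 + (x (2,2)).re^2 + (x (2,2)).im^2)
      + (1 - 3/2*l3^2) * ((x (0,2)).re^2 + (x (0,2)).im^2 + (x (2,0)).re^2 + (x (2,0)).im^2)
      + ((x (0,1)).re^2 + (x (0,1)).im^2 + (x (1,0)).re^2 + (x (1,0)).im^2
        + (x (1,1)).re^2 + (x (1,1)).im^2 + (x (1,2)).re^2 + (x (1,2)).im^2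
        + (x (2,1)).re^2 + (x (2,1)).im^2)
      + 3/2*(l1^2+l2^2) * ((x (0,0)).re*(x (1,1)).re + (x (0,0)).im*(x (1,1)).im
        + (x (1,1)).re*(x (2,2)).re + (x (1,1)).im*(x (2,2)).im
        + (x (0,1)).re*(x (1,2)).re + (x (0,1)).im*(x (1,2)).im
        + (x (1,0)).re*(x (2,1)).re + (x (1,0)).im*(x (2,1)).im)
      + 3/2*(l1^2-l2^2) * ((x (0,2)).re*(x (1,1)).re + (x (0,2)).im*(x (1,1)).im
        + (x (1,1)).re*(x (2,0)).re + (x (1,1)).im*(x (2,0)).im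
        + (x (0,1)).re*(x (1,0)).re + (x (0,1)).im*(x (1,0)).im
        + (x (1,2)).re*(x (2,1)).re + (x (1,2)).im*(x (2,1)).im) : ℝ) : ℂ) := by
  rw [J1kron, J2kron]
  apply Complex.ext <;>
  · simp [dotProduct, mulVec, Fintype.sum_prod_type, Fin.sum_univ_three, Matrix.one_apply,
      spinOneJ3, kroneckerMap_apply, Matrix.smul_apply, Matrix.add_apply, Matrix.sub_apply,
      Prod.mk.injEq, Complex.add_re, Complex.add_im, Complex.mul_re, Complex.mul_im, pow_two, Matrix.vecHead, Matrix.vecTail]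
    ring

lemma aux2 (A B m ur ui vr vi : ℝ) (hA : 0 ≤ A) (hB : 0 ≤ B) (hm : m^2 ≤ A*B) :
    0 ≤ A*(ur^2+ui^2) + B*(vr^2+vi^2) - 2*m*(ur*vr+ui*vi) := by
  rcases hA.eq_or_lt with h0 | hpos
  · have hm0 : m = 0 := by nlinarith [sq_nonneg m]
    rw [hm0, ← h0]
    nlinarith [mul_nonneg hB (add_nonneg (sq_nonneg vr) (sq_nonneg vi))]
  · nlinarith [sq_nonneg (A*ur - m*vr), sq_nonneg (A*ui - m*vi),
      mul_nonneg (sub_nonneg.2 hm) (add_nonneg (sq_nonneg vr) (sq_nonneg vi)), hpos]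

set_option maxHeartbeats 2000000 in
lemma key (a b c : ℝ) (ha0 : 0 ≤ a) (hb0 : 0 ≤ b) (hc0 : 0 ≤ c) (ha : a ≤ 1) (hb : b ≤ 1) (hc : c ≤ 1)
    (hD : 0 ≤ 1 - a^2 - b^2 - c^2 + 2*a*b*c)
    (r0 i0 r1 i1 r2 i2 r3 i3 r4 i4 r5 i5 r6 i6 r7 i7 r8 i8 : ℝ) :
    0 ≤ (1+c)*(r0^2+i0^2+r8^2+i8^2) + (1-c)*(r2^2+i2^2+r6^2+i6^2)
      + (r1^2+i1^2+r3^2+i3^2+r4^2+i4^2+r5^2+i5^2+r7^2+i7^2)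
      + (a+b)*(r0*r4+i0*i4+r4*r8+i4*i8+r1*r5+i1*i5+r3*r7+i3*i7)
      + (a-b)*(r2*r4+i2*i4+r4*r6+i4*i6+r1*r3+i1*i3+r5*r7+i5*i7) := by
  have hab1 : a*b ≤ 1 := mul_le_one₀ ha hb0 hb
  have h2ab : 2*a*b ≤ 1 + c := by
    rcases hc.eq_or_lt with h1 | h1
    · linarith
    · nlinarith [hD, sq_nonneg (a-b), mul_pos (sub_pos.2 h1) (sub_pos.2 h1)]
  have hA : 0 ≤ (1+c)/2 - ((a+b)/2)^2 := by
    nlinarith [hD, h2ab, mul_nonneg hc0 (by linarith : (0:ℝ) ≤ 1 + c - 2*a*b)]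
  have hB : 0 ≤ (1-c)/2 - ((a-b)/2)^2 := by
    have h1 : 0 ≤ (1-c)*(1-c+2*a*b) :=
      mul_nonneg (by linarith) (by nlinarith [mul_nonneg ha0 hb0])
    nlinarith [hD]
  have hABm : (((a+b)/2)*((a-b)/2))^2 ≤ ((1+c)/2 - ((a+b)/2)^2)*((1-c)/2 - ((a-b)/2)^2) := by
    nlinarith [hD]
  have g2 := aux2 ((1+c)/2 - ((a+b)/2)^2) ((1-c)/2 - ((a-b)/2)^2) (((a+b)/2)*((a-b)/2))
    (r0+r8) (i0+i8) (r2+r6) (i2+i6) hA hB hABm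
  have godd : (0:ℝ) ≤ 4*((r1^2+i1^2+r3^2+i3^2+r5^2+i5^2+r7^2+i7^2)
      + (a+b)*(r1*r5+i1*i5+r3*r7+i3*i7) + (a-b)*(r1*r3+i1*i3+r5*r7+i5*i7)) := by
    have e1 := mul_nonneg (by linarith : (0:ℝ) ≤ 1+a) (sq_nonneg (r1+r3+r5+r7))
    have e2 := mul_nonneg (by linarith : (0:ℝ) ≤ 1-a) (sq_nonneg (r1-r3-r5+r7))
    have e3 := mul_nonneg (by linarith : (0:ℝ) ≤ 1+b) (sq_nonneg (r1-r3+r5-r7))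
    have e4 := mul_nonneg (by linarith : (0:ℝ) ≤ 1-b) (sq_nonneg (r1+r3-r5-r7))
    have f1 := mul_nonneg (by linarith : (0:ℝ) ≤ 1+a) (sq_nonneg (i1+i3+i5+i7))
    have f2 := mul_nonneg (by linarith : (0:ℝ) ≤ 1-a) (sq_nonneg (i1-i3-i5+i7))
    have f3 := mul_nonneg (by linarith : (0:ℝ) ≤ 1+b) (sq_nonneg (i1-i3+i5-i7))
    have f4 := mul_nonneg (by linarith : (0:ℝ) ≤ 1-b) (sq_nonneg (i1+i3-i5-i7))
    linarith [e1, e2, e3, e4, f1, f2, f3, f4]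
  have geven : (0:ℝ) ≤ 2*((1+c)*(r0^2+i0^2+r8^2+i8^2) + (1-c)*(r2^2+i2^2+r6^2+i6^2) + (r4^2+i4^2)
      + (a+b)*(r0*r4+i0*i4+r4*r8+i4*i8) + (a-b)*(r2*r4+i2*i4+r4*r6+i4*i6)) := by
    have e1 := mul_nonneg (by linarith : (0:ℝ) ≤ 1+c) (sq_nonneg (r0-r8))
    have e2 := mul_nonneg (by linarith : (0:ℝ) ≤ 1-c) (sq_nonneg (r2-r6))
    have f1 := mul_nonneg (by linarith : (0:ℝ) ≤ 1+c) (sq_nonneg (i0-i8))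
    have f2 := mul_nonneg (by linarith : (0:ℝ) ≤ 1-c) (sq_nonneg (i2-i6))
    have s1 := sq_nonneg (r4 + ((a+b)/2)*(r0+r8) + ((a-b)/2)*(r2+r6))
    have s2 := sq_nonneg (i4 + ((a+b)/2)*(i0+i8) + ((a-b)/2)*(i2+i6))
    linarith [e1, e2, f1, f2, s1, s2, g2]
  linarith [godd, geven]

set_option maxHeartbeats 4000000 in
theorem qutrit_squared_choi_posSemidef_iff (l1 l2 l3 : ℝ) :
    ((1 : Matrix (Fin 3) (Fin 3) ℂ) ⊗ₖ (1 : Matrix (Fin 3) (Fin 3) ℂ) +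
      ((3 / 2 : ℝ) : ℂ) • (((l1 ^ 2 : ℝ) : ℂ) • (spinOneJ1 ⊗ₖ spinOneJ1) -
        ((l2 ^ 2 : ℝ) : ℂ) • (spinOneJ2 ⊗ₖ spinOneJ2) +
        ((l3 ^ 2 : ℝ) : ℂ) • (spinOneJ3 ⊗ₖ spinOneJ3))).PosSemidef ↔
    (4 - 9 * (l1 ^ 4 + l2 ^ 4 + l3 ^ 4) + 27 * (l1 ^ 2 * l2 ^ 2 * l3 ^ 2) ≥ 0 ∧
      l1 ^ 2 ≤ 2 / 3 ∧ l2 ^ 2 ≤ 2 / 3 ∧ l3 ^ 2 ≤ 2 / 3) := by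
  constructor
  · intro h
    have h1 := h.dotProduct_mulVec_nonneg (fun ij => (!![0,1,0;-1,0,-1;0,1,0] : Matrix (Fin 3) (Fin 3) ℂ) ij.1 ij.2)
    rw [form_eval, Complex.zero_le_real] at h1
    norm_num [Matrix.vecHead, Matrix.vecTail, Matrix.cons_val_two] at h1
    have h2 := h.dotProduct_mulVec_nonneg (fun ij => (!![0,1,0;1,0,-1;0,-1,0] : Matrix (Fin 3) (Fin 3) ℂ) ij.1 ij.2)
    rw [form_eval, Complex.zero_le_real] at h2
    norm_num [Matrix.vecHead, Matrix.vecTail, Matrix.cons_val_two] at h2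
    have h3 := h.dotProduct_mulVec_nonneg (fun ij => (!![0,0,1;0,0,0;-1,0,0] : Matrix (Fin 3) (Fin 3) ℂ) ij.1 ij.2)
    rw [form_eval, Complex.zero_le_real] at h3
    norm_num [Matrix.vecHead, Matrix.vecTail, Matrix.cons_val_two] at h3
    have hL1 : l1^2 ≤ 2/3 := by linarith
    have hL2 : l2^2 ≤ 2/3 := by linarith
    have hL3 : l3^2 ≤ 2/3 := by linarith
    refine ⟨?_, hL1, hL2, hL3⟩
    have hf : ∀ α β γ : ℝ, 0 ≤ 2*(1 + 3/2*l3^2)*α^2 + 2*(1 - 3/2*l3^2)*β^2 + γ^2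
        + 3*(l1^2+l2^2)*α*γ + 3*(l1^2-l2^2)*β*γ := by
      intro α β γ
      have hh := h.dotProduct_mulVec_nonneg (fun ij => (!![(α:ℂ),0,(β:ℂ);0,(γ:ℂ),0;(β:ℂ),0,(α:ℂ)] : Matrix (Fin 3) (Fin 3) ℂ) ij.1 ij.2)
      rw [form_eval, Complex.zero_le_real] at hh
      norm_num [Matrix.vecHead, Matrix.vecTail, Matrix.cons_val_two] at hh
      linarith [hh]
    rcases hL3.eq_or_lt with hc1 | hc1
    · -- l3^2 = 2/3
      rcases eq_or_ne (l1^2) (l2^2) with heq | hne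
      · have e1 : l2^2 = l1^2 := heq.symm
        have e2 : l2^4 = l1^4 := by rw [show l2^4 = (l2^2)^2 by ring, e1]; ring
        have e3 : l3^4 = 4/9 := by rw [show l3^4 = (l3^2)^2 by ring, hc1]; norm_num
        have e4 : l1^2*l2^2*l3^2 = l1^4*(2/3) := by rw [e1, hc1]; ring
        rw [ge_iff_le]
        linarith [e2, e3, e4]
      · exfalso
        have hd : l1^2 - l2^2 ≠ 0 := sub_ne_zero.2 hne
        have hh := hf 0 (-2/(3*(l1^2 - l2^2))) 1
        have hz : (1 : ℝ) - 3/2*l3^2 = 0 := by rw [hc1]; norm_num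
        have hprod : 3*(l1^2-l2^2)*(-2/(3*(l1^2 - l2^2))) = -2 := by
          field_simp
        nlinarith [hh, hz, hprod, sq_nonneg (-2/(3*(l1^2 - l2^2)))]
    · -- l3^2 < 2/3
      have hpos : 0 < 1 - (3/2*l3^2)^2 := by nlinarith [sq_nonneg l3]
      have hh := hf (-(3/2*(l1^2+l2^2)/2)*(1 - 3/2*l3^2)) (-(3/2*(l1^2-l2^2)/2)*(1 + 3/2*l3^2))
        (1 - (3/2*l3^2)^2)
      rw [ge_iff_le]
      nlinarith [hh, hpos]
  · rintro ⟨hquart, hL1, hL2, hL3⟩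
    refine PosSemidef.of_dotProduct_mulVec_nonneg (herm l1 l2 l3) (fun x => ?_)
    rw [form_eval, Complex.zero_le_real]
    have hk := key (3/2*l1^2) (3/2*l2^2) (3/2*l3^2)
      (by positivity) (by positivity) (by positivity)
      (by linarith) (by linarith) (by linarith)
      (by nlinarith [hquart])
      (x (0,0)).re (x (0,0)).im (x (0,1)).re (x (0,1)).im (x (0,2)).re (x (0,2)).im
      (x (1,0)).re (x (1,0)).im (x (1,1)).re (x (1,1)).im (x (1,2)).re (x (1,2)).im
      (x (2,0)).re (x (2,0)).im (x (2,1)).re (x (2,1)).im (x (2,2)).re (x (2,2)).im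
    linarith [hk]
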